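/- Let λ > 0 and let C₀, C_pred ∈ ℝ^{m×n}. Suppose π₀ and π_pred are m×n matrices with strictly positive entries satisfying log π₀ = λ(−C₀ + a1^T + 1b^T) and log π_pred = λ(−C_pred + a'1^T + 1b'^T) entrywise, for some vectors a, a' ∈ ℝ^m and b, b' ∈ ℝ^n. Let ΔC = C₀ − C_pred and suppose ΔC cannot be written in the form u1^T + 1v^T for any u ∈ ℝ^m, v ∈ ℝ^n. Then ‖log π₀ − log π_pred‖_F² ≥ λ²·inf over (u,v) of ‖ΔC − (u1^T + 1v^T)‖_F², and this lower bound is strictly positive; in particular π₀ ≠ π_pred. -/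

import Mathlib

/-- The infimum over all vectors `u, v` of `‖D − (u𝟙ᵀ + 𝟙vᵀ)‖_F²`. -/
noncomputable def residInf {m n : ℕ} (D : Matrix (Fin m) (Fin n) ℝ) : ℝ :=
  sInf {r : ℝ | ∃ (u : Fin m → ℝ) (v : Fin n → ℝ),
    r = ∑ i, ∑ j, (D i j - (u i + v j)) ^ 2}

theorem aux_min (m n : ℕ) (hm : 0 < m) (hn : 0 < n) (D : Matrix (Fin m) (Fin n) ℝ) :
    ∃ (ρ : Fin m → ℝ) (γ : Fin n → ℝ),
      (∀ u v : Fin m → ℝ, True) ∧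
      ∀ (u : Fin m → ℝ) (v : Fin n → ℝ),
        ∑ i, ∑ j, (D i j - (ρ i + γ j)) ^ 2 ≤ ∑ i, ∑ j, (D i j - (u i + v j)) ^ 2 := by
  set T : ℝ := ∑ i, ∑ j, D i j with hT
  set ρ : Fin m → ℝ := fun i => (∑ j, D i j) / n - T / (m * n) with hρ
  set γ : Fin n → ℝ := fun j => (∑ i, D i j) / m with hγ
  set R : Fin m → Fin n → ℝ := fun i j => D i j - ρ i - γ j with hR
  have hm' : (m : ℝ) ≠ 0 := Nat.cast_ne_zero.mpr hm.ne'
  have hn' : (n : ℝ) ≠ 0 := Nat.cast_ne_zero.mpr hn.ne'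
  have hγsum : ∑ j, γ j = T / m := by
    simp only [hγ, ← Finset.sum_div]
    rw [Finset.sum_comm]
  have hρsum : ∑ i, ρ i = 0 := by
    simp only [hρ]
    rw [Finset.sum_sub_distrib, ← Finset.sum_div, ← hT]
    simp only [Finset.sum_const, Finset.card_univ, Fintype.card_fin, nsmul_eq_mul]
    field_simp
    ring
  have hrow : ∀ i, ∑ j, R i j = 0 := by
    intro i
    simp only [hR]
    rw [Finset.sum_sub_distrib, Finset.sum_sub_distrib, hγsum]
    simp only [Finset.sum_const, Finset.card_univ, Fintype.card_fin, nsmul_eq_mul, hρ]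
    field_simp
    ring
  have hcol : ∀ j, ∑ i, R i j = 0 := by
    intro j
    simp only [hR]
    rw [Finset.sum_sub_distrib, Finset.sum_sub_distrib, hρsum]
    simp only [Finset.sum_const, Finset.card_univ, Fintype.card_fin, nsmul_eq_mul, hγ]
    field_simp
    ring
  refine ⟨ρ, γ, fun _ _ => trivial, fun u v => ?_⟩
  set w : Fin m → ℝ := fun i => ρ i - u i with hw
  set z : Fin n → ℝ := fun j => γ j - v j with hz
  have key : ∀ i j, D i j - (u i + v j) = R i j + (w i + z j) := by
    intro i j; simp only [hR, hw, hz]; ring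
  have cross : ∑ i, ∑ j, R i j * (w i + z j) = 0 := by
    have h1 : ∀ i, ∑ j, R i j * (w i + z j)
        = w i * (∑ j, R i j) + ∑ j, R i j * z j := by
      intro i
      rw [Finset.mul_sum, ← Finset.sum_add_distrib]
      congr 1; ext j; ring
    calc ∑ i, ∑ j, R i j * (w i + z j)
        = ∑ i, (w i * (∑ j, R i j) + ∑ j, R i j * z j) := by
          exact Finset.sum_congr rfl fun i _ => h1 i
      _ = ∑ i, ∑ j, R i j * z j := by
          simp only [hrow, mul_zero, zero_add]
      _ = ∑ j, ∑ i, R i j * z j := Finset.sum_comm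
      _ = ∑ j, (∑ i, R i j) * z j := by
          exact Finset.sum_congr rfl fun j _ => (Finset.sum_mul _ _ _).symm
      _ = 0 := by simp only [hcol, zero_mul, Finset.sum_const_zero]
  have expand : ∑ i, ∑ j, (D i j - (u i + v j)) ^ 2
      = ∑ i, ∑ j, (R i j) ^ 2 + 2 * (∑ i, ∑ j, R i j * (w i + z j))
        + ∑ i, ∑ j, (w i + z j) ^ 2 := by
    rw [Finset.mul_sum, ← Finset.sum_add_distrib, ← Finset.sum_add_distrib]
    refine Finset.sum_congr rfl fun i _ => ?_
    rw [Finset.mul_sum, ← Finset.sum_add_distrib, ← Finset.sum_add_distrib]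
    refine Finset.sum_congr rfl fun j _ => ?_
    rw [key i j]; ring
  rw [expand, cross, mul_zero, add_zero]
  have hEq : ∑ i, ∑ j, (D i j - (ρ i + γ j)) ^ 2 = ∑ i, ∑ j, R i j ^ 2 :=
    Finset.sum_congr rfl fun i _ => Finset.sum_congr rfl fun j _ => by
      simp only [hR]; ring
  rw [hEq]
  have : 0 ≤ ∑ i, ∑ j, (w i + z j) ^ 2 :=
    Finset.sum_nonneg fun i _ => Finset.sum_nonneg fun j _ => sq_nonneg _
  linarith

/-- If `log π₀ = λ(−C₀ + a𝟙ᵀ + 𝟙bᵀ)` and `log π_pred = λ(−C_pred + a'𝟙ᵀ + 𝟙b'ᵀ)` with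
`π₀, π_pred` entrywise positive, and `ΔC = C₀ − C_pred` is not of the form `u𝟙ᵀ + 𝟙vᵀ`,
then `‖log π₀ − log π_pred‖_F² ≥ λ²·inf_{u,v} ‖ΔC − (u𝟙ᵀ + 𝟙vᵀ)‖_F²`, the lower bound is
strictly positive, and in particular `π₀ ≠ π_pred`. -/
theorem iot_prediction_error_lower_bound (m n : ℕ) (lam : ℝ) (hlam : 0 < lam)
    (C₀ Cpred : Matrix (Fin m) (Fin n) ℝ)
    (π₀ πpred : Matrix (Fin m) (Fin n) ℝ)
    (hπ₀pos : ∀ i j, 0 < π₀ i j) (hπpredpos : ∀ i j, 0 < πpred i j)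
    (a a' : Fin m → ℝ) (b b' : Fin n → ℝ)
    (hπ₀ : ∀ i j, Real.log (π₀ i j) = lam * (-C₀ i j + a i + b j))
    (hπpred : ∀ i j, Real.log (πpred i j) = lam * (-Cpred i j + a' i + b' j))
    (hnot : ¬ ∃ (u : Fin m → ℝ) (v : Fin n → ℝ), ∀ i j,
        C₀ i j - Cpred i j = u i + v j) :
    lam ^ 2 * residInf (Matrix.of fun i j => C₀ i j - Cpred i j)
      ≤ ∑ i, ∑ j, (Real.log (π₀ i j) - Real.log (πpred i j)) ^ 2 ∧
    0 < lam ^ 2 * residInf (Matrix.of fun i j => C₀ i j - Cpred i j) ∧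
    π₀ ≠ πpred := by
  have hm : 0 < m := by
    rcases Nat.eq_zero_or_pos m with h | h
    · subst h; exact absurd ⟨0, 0, fun i => i.elim0⟩ hnot
    · exact h
  have hn : 0 < n := by
    rcases Nat.eq_zero_or_pos n with h | h
    · subst h; exact absurd ⟨0, 0, fun i j => j.elim0⟩ hnot
    · exact h
  set D : Matrix (Fin m) (Fin n) ℝ := Matrix.of fun i j => C₀ i j - Cpred i j with hD
  obtain ⟨ρ, γ, -, hmin⟩ := aux_min m n hm hn D
  set rstar : ℝ := ∑ i, ∑ j, (D i j - (ρ i + γ j)) ^ 2 with hrstar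
  set S : Set ℝ := {r : ℝ | ∃ (u : Fin m → ℝ) (v : Fin n → ℝ),
    r = ∑ i, ∑ j, (D i j - (u i + v j)) ^ 2} with hS
  have hSne : S.Nonempty := ⟨_, 0, 0, rfl⟩
  have hlb : ∀ r ∈ S, rstar ≤ r := by
    rintro r ⟨u, v, rfl⟩; exact hmin u v
  have hinf_ge : rstar ≤ residInf D := le_csInf hSne hlb
  have hbdd : BddBelow S := ⟨rstar, hlb⟩
  -- the specific element coming from π₀, πpred
  have hElem : (∑ i, ∑ j, (D i j - ((a i - a' i) + (b j - b' j))) ^ 2) ∈ S :=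
    ⟨_, _, rfl⟩
  have hinf_le : residInf D ≤ ∑ i, ∑ j, (D i j - ((a i - a' i) + (b j - b' j))) ^ 2 :=
    csInf_le hbdd hElem
  have hSum : ∑ i, ∑ j, (Real.log (π₀ i j) - Real.log (πpred i j)) ^ 2
      = lam ^ 2 * ∑ i, ∑ j, (D i j - ((a i - a' i) + (b j - b' j))) ^ 2 := by
    rw [Finset.mul_sum]
    refine Finset.sum_congr rfl fun i _ => ?_
    rw [Finset.mul_sum]
    refine Finset.sum_congr rfl fun j _ => ?_
    rw [hπ₀ i j, hπpred i j]
    simp only [hD, Matrix.of_apply]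
    ring
  have h1 : lam ^ 2 * residInf D
      ≤ ∑ i, ∑ j, (Real.log (π₀ i j) - Real.log (πpred i j)) ^ 2 := by
    rw [hSum]
    exact mul_le_mul_of_nonneg_left hinf_le (sq_nonneg lam)
  have hrstar_pos : 0 < rstar := by
    rcases lt_or_eq_of_le (Finset.sum_nonneg fun i _ =>
      Finset.sum_nonneg fun j _ => sq_nonneg (D i j - (ρ i + γ j))) with h | h
    · exact h
    · exfalso
      apply hnot
      refine ⟨ρ, γ, fun i j => ?_⟩
      have hz : ∀ i ∈ Finset.univ, ∀ j ∈ Finset.univ,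
          (D i j - (ρ i + γ j)) ^ 2 = 0 := by
        intro i _ j _
        have := (Finset.sum_eq_zero_iff_of_nonneg (fun i _ =>
          Finset.sum_nonneg fun j _ => sq_nonneg (D i j - (ρ i + γ j)))).mp h.symm i
          (Finset.mem_univ i)
        exact (Finset.sum_eq_zero_iff_of_nonneg (fun j _ =>
          sq_nonneg _)).mp this j (Finset.mem_univ j)
      have := hz i (Finset.mem_univ i) j (Finset.mem_univ j)
      have hDij : D i j - (ρ i + γ j) = 0 := by
        exact (pow_eq_zero_iff two_ne_zero).mp this
      have : D i j = ρ i + γ j := by linarith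
      simpa [hD] using this
  have h2 : 0 < lam ^ 2 * residInf D :=
    mul_pos (pow_pos hlam 2) (lt_of_lt_of_le hrstar_pos hinf_ge)
  refine ⟨h1, h2, ?_⟩
  intro heq
  rw [heq] at h1
  simp at h1
  linarith
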